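/- arXiv:2004.07801 — 2 statements merged into one kernel-verified Lean document; each statement's English description precedes it below -/
import Mathlib

section
/- Weak type $(1,1)$ estimate for the Paley operator: Let $\varphi:\mathbb{N}\to(0,\infty)$ satisfy $M_\varphi:=\sup_{t>0}\, t\sum_{j\in\mathbb{N},\ \varphi(j)\ge t}\|u_j\|_{L^\infty}^2<\infty$. Then for every $f\in L^1(\mathbb{R}^n)$ and every $y>0$ one has $\sum_{j\in\mathbb{N},\ |\widehat{f}(j)| > y\,\varphi(j)\|u_j\|_{L^\infty}} \varphi(j)^2\,\|u_j\|_{L^\infty}^2 \le 2\,M_\varphi\,\|f\|_{L^1(\mathbb{R}^n)}/y$. -/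
open MeasureTheory ENNReal Set

/-- **Weak type (1,1) estimate for the Paley operator**: if `φ : ℕ → (0,∞)` satisfies
`M_φ := sup_{t>0} t ∑_{φ(j) ≥ t} ‖uⱼ‖_∞² < ∞`, then for every `f ∈ L¹(ℝⁿ)` and `y > 0`,
the weighted count of `j` with `|f̂(j)| > y φ(j) ‖uⱼ‖_∞` (with weights `φ(j)² ‖uⱼ‖_∞²`)
is at most `2 M_φ ‖f‖_{L¹} / y`. -/
theorem paley_weak_type_one_one
    (n : ℕ) (hn : 1 ≤ n)
    (u : ℕ → (Fin n → ℝ) → ℂ)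
    (hu2 : ∀ j, MemLp (u j) 2 volume)
    (huB : ∀ j, MemLp (u j) ⊤ volume)
    (horth : ∀ i j, (∫ x, u i x * (starRingEnd ℂ) (u j x)) = if i = j then (1 : ℂ) else 0)
    (hbasis : ∀ g : (Fin n → ℝ) → ℂ, MemLp g 2 volume →
      (∀ j, (∫ x, g x * (starRingEnd ℂ) (u j x)) = 0) → g =ᵐ[volume] 0)
    (φ : ℕ → ℝ) (hφ : ∀ j, 0 < φ j)
    (M : ℝ≥0∞)
    (hM : M = ⨆ (t : ℝ) (_ : 0 < t), ENNReal.ofReal t *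
        ∑' j : ℕ, (if t ≤ φ j then eLpNorm (u j) ⊤ volume ^ 2 else 0))
    (hMfin : M ≠ ⊤)
    (f : (Fin n → ℝ) → ℂ) (hf1 : MemLp f 1 volume)
    (y : ℝ) (hy : 0 < y) :
    (∑' j : ℕ,
        (if ENNReal.ofReal (y * φ j) * eLpNorm (u j) ⊤ volume
              < (‖∫ x, f x * (starRingEnd ℂ) (u j x)‖₊ : ℝ≥0∞)
          then ENNReal.ofReal (φ j) ^ 2 * eLpNorm (u j) ⊤ volume ^ 2 else 0))
      ≤ 2 * M * eLpNorm f 1 volume / ENNReal.ofReal y := by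
  classical
  set N : ℕ → ℝ≥0∞ := fun j => eLpNorm (u j) ⊤ volume with hN
  set F : ℝ≥0∞ := eLpNorm f 1 volume with hF
  have hFfin : F ≠ ⊤ := hf1.2.ne
  -- Step 1: basic bound on Fourier coefficients
  have hbound : ∀ j, (‖∫ x, f x * (starRingEnd ℂ) (u j x)‖₊ : ℝ≥0∞) ≤ N j * F := by
    intro j
    calc (‖∫ x, f x * (starRingEnd ℂ) (u j x)‖₊ : ℝ≥0∞)
        ≤ ∫⁻ x, ‖f x * (starRingEnd ℂ) (u j x)‖₊ :=
          enorm_integral_le_lintegral_enorm _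
      _ = ∫⁻ x, (‖f x‖₊ : ℝ≥0∞) * ‖u j x‖₊ := by
          simp [nnnorm_mul, ENNReal.coe_mul]
      _ ≤ ∫⁻ x, (‖f x‖₊ : ℝ≥0∞) * N j := by
          refine lintegral_mono_ae ?_
          filter_upwards [ae_le_eLpNormEssSup (f := u j) (μ := volume)] with x hx
          exact mul_le_mul_right (show (‖u j x‖₊ : ℝ≥0∞) ≤ N j from hx.trans_eq (by simp [hN, eLpNorm_exponent_top])) _
      _ = F * N j := by
          rw [show (∫⁻ x, (‖f x‖₊ : ℝ≥0∞) * N j) = ∫⁻ x, ‖f x‖ₑ * N j from rfl, lintegral_mul_const'' _ hf1.1.enorm, hF, eLpNorm_one_eq_lintegral_enorm]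
      _ = N j * F := mul_comm _ _
  set cond : ℕ → Prop := fun j =>
    ENNReal.ofReal (y * φ j) * N j < (‖∫ x, f x * (starRingEnd ℂ) (u j x)‖₊ : ℝ≥0∞) with hcond
  set L : ℝ := F.toReal / y with hL
  have hNfin : ∀ j, N j ≠ ⊤ := fun j => (huB j).2.ne
  -- Step 2: the condition forces φ j < L
  have hcL : ∀ j, cond j → φ j < L := by
    intro j hj
    have hNne : N j ≠ 0 := by
      intro h0
      rw [hcond] at hj
      have := lt_of_lt_of_le hj (hbound j)
      simp [h0] at this
    have h1 : ENNReal.ofReal (y * φ j) * N j < F * N j := by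
      calc ENNReal.ofReal (y * φ j) * N j < _ := hj
        _ ≤ N j * F := hbound j
        _ = F * N j := mul_comm _ _
    have h2 : ENNReal.ofReal (y * φ j) < F :=
      (ENNReal.mul_left_strictMono hNne (hNfin j)).lt_iff_lt.mp h1
    have h3 : y * φ j < F.toReal :=
      (ENNReal.ofReal_lt_iff_lt_toReal (mul_nonneg hy.le (hφ j).le) hFfin).mp h2
    rw [hL, lt_div_iff₀ hy]
    linarith [h3]
  -- Layer-cake formula for a single term
  have hcake : ∀ a : ℝ, 0 ≤ a →
      (∫⁻ t in Ioc (0:ℝ) a, ENNReal.ofReal (2 * t)) = ENNReal.ofReal a ^ 2 := by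
    intro a ha
    rw [← ofReal_integral_eq_lintegral_ofReal]
    · have : (∫ t in Ioc (0:ℝ) a, 2 * t) = a ^ 2 := by
        rw [← intervalIntegral.integral_of_le ha, intervalIntegral.integral_const_mul,
          integral_id]
        ring
      rw [this, ← ENNReal.ofReal_pow ha]
    · exact (continuous_const.mul continuous_id).integrableOn_Ioc
    · filter_upwards [ae_restrict_mem measurableSet_Ioc] with t ht
      have := ht.1
      positivity
  set g : ℕ → ℝ → ℝ≥0∞ := fun j t =>
    if cond j then (Ioc (0:ℝ) (φ j)).indicator (fun t => ENNReal.ofReal (2 * t) * N j ^ 2) t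
    else 0 with hg
  have hgmeas : ∀ j, AEMeasurable (g j) volume := by
    intro j
    rw [hg]
    by_cases h : cond j <;> simp only [h, if_true, if_false]
    · exact (((measurable_const.mul measurable_id').ennreal_ofReal.mul
        measurable_const).indicator measurableSet_Ioc).aemeasurable
    · exact aemeasurable_const
  have hgint : ∀ j, (∫⁻ t, g j t) =
      (if cond j then ENNReal.ofReal (φ j) ^ 2 * N j ^ 2 else 0) := by
    intro j
    rw [hg]
    by_cases h : cond j <;> simp only [h, if_true, if_false]
    · rw [lintegral_indicator measurableSet_Ioc,
        lintegral_mul_const' _ _ (by simp [pow_eq_top_iff, hNfin j]),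
        hcake (φ j) (hφ j).le]
    · simp
  calc (∑' j : ℕ,
        (if ENNReal.ofReal (y * φ j) * eLpNorm (u j) ⊤ volume
              < (‖∫ x, f x * (starRingEnd ℂ) (u j x)‖₊ : ℝ≥0∞)
          then ENNReal.ofReal (φ j) ^ 2 * eLpNorm (u j) ⊤ volume ^ 2 else 0))
      = ∑' j : ℕ, ∫⁻ t, g j t := by
        refine tsum_congr fun j => ?_
        rw [hgint j]
    _ = ∫⁻ t, ∑' j : ℕ, g j t := (lintegral_tsum hgmeas).symm
    _ ≤ ∫⁻ t, (Ioo (0:ℝ) L).indicator (fun _ => 2 * M) t := by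
        refine lintegral_mono fun t => ?_
        by_cases ht : t ∈ Ioo (0:ℝ) L
        · -- bound the inner sum by 2M
          have h1 : ∀ j, g j t ≤ ENNReal.ofReal (2 * t) *
              (if t ≤ φ j then N j ^ 2 else 0) := by
            intro j
            rw [hg]
            by_cases h : cond j <;> simp only [h, if_true, if_false]
            · by_cases h2 : t ∈ Ioc (0:ℝ) (φ j)
              · rw [indicator_of_mem h2]
                simp [h2.2]
              · rw [indicator_of_notMem h2]
                exact zero_le
            · exact zero_le
          calc (∑' j, g j t) ≤ ∑' j, ENNReal.ofReal (2 * t) *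
                (if t ≤ φ j then N j ^ 2 else 0) := ENNReal.tsum_le_tsum h1
            _ = ENNReal.ofReal (2 * t) * ∑' j, (if t ≤ φ j then N j ^ 2 else 0) :=
                ENNReal.tsum_mul_left
            _ = 2 * (ENNReal.ofReal t * ∑' j, (if t ≤ φ j then N j ^ 2 else 0)) := by
                rw [ENNReal.ofReal_mul (by norm_num), ENNReal.ofReal_ofNat, mul_assoc]
            _ ≤ 2 * M := by
                gcongr
                rw [hM]
                exact le_iSup₂ (f := fun (t : ℝ) (_ : 0 < t) => ENNReal.ofReal t *
                  ∑' j : ℕ, (if t ≤ φ j then eLpNorm (u j) ⊤ volume ^ 2 else 0)) t ht.1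
            _ = (Ioo (0:ℝ) L).indicator (fun _ => 2 * M) t := by
                rw [indicator_of_mem ht]
        · rw [indicator_of_notMem ht]
          have : ∀ j, g j t = 0 := by
            intro j
            rw [hg]
            by_cases h : cond j <;> simp only [h, if_true, if_false]
            refine indicator_of_notMem ?_ _
            intro h2
            exact ht ⟨h2.1, lt_of_le_of_lt h2.2 (hcL j h)⟩
          simp [this]
    _ = 2 * M * ENNReal.ofReal L := by
        rw [lintegral_indicator measurableSet_Ioo, setLIntegral_const, Real.volume_Ioo,
          sub_zero]
    _ = 2 * M * F / ENNReal.ofReal y := by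
        rw [hL, ENNReal.ofReal_div_of_pos hy, ENNReal.ofReal_toReal hFfin, mul_div_assoc]
end

section
/- Boundedness of negative powers: Let $1<p\le 2\le q<\infty$ and let $m>(2+\alpha)\big(\frac{1}{p}-\frac{1}{q}\big)$. Then there is a constant $C$ such that for every $f\in L^p(\mathbb{R}^n)\cap L^2(\mathbb{R}^n)$ the function $A^{-m}f:=\sum_{j\in\mathbb{N}}\lambda_j^{-m}\,\widehat{f}(j)\,u_j$ (the series converging in $L^2$) satisfies $\|A^{-m}f\|_{L^q(\mathbb{R}^n)}\le C\,\|f\|_{L^p(\mathbb{R}^n)}$. -/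
open MeasureTheory ENNReal Set

section AuxLemmas

private lemma aux_interp {X : Type*} [MeasurableSpace X] {μ : Measure X}
    (h : X → ℂ) {r : ℝ} (hr : 2 ≤ r) {A B : ℝ≥0∞} (hA : A ≠ ⊤)
    (h2 : eLpNorm h 2 μ ≤ B) (hinf : eLpNormEssSup h μ ≤ A) :
    eLpNorm h (ENNReal.ofReal r) μ ≤ B ^ (2/r) * A ^ (1 - 2/r) := by
  have hr0 : (0:ℝ) < r := lt_of_lt_of_le two_pos hr
  have hI2 : (∫⁻ x, (‖h x‖₊ : ℝ≥0∞) ^ (2:ℝ) ∂μ) ≤ B ^ (2:ℝ) := by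
    have := eLpNorm_eq_lintegral_rpow_enorm_toReal (f := h) (μ := μ) two_ne_zero ENNReal.ofNat_ne_top
    rw [this] at h2
    simp only [ENNReal.toReal_ofNat] at h2
    have := ENNReal.rpow_le_rpow h2 (by norm_num : (0:ℝ) ≤ 2)
    rwa [← ENNReal.rpow_mul, one_div, inv_mul_cancel₀ (by norm_num : (2:ℝ) ≠ 0),
      ENNReal.rpow_one] at this
  have hae : ∀ᵐ x ∂μ, (‖h x‖₊ : ℝ≥0∞) ≤ A :=
    (enorm_ae_le_eLpNormEssSup h μ).mono fun x hx => hx.trans hinf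
  have step1 : (∫⁻ x, (‖h x‖₊ : ℝ≥0∞) ^ r ∂μ) ≤ A ^ (r - 2) * B ^ (2:ℝ) := by
    calc (∫⁻ x, (‖h x‖₊ : ℝ≥0∞) ^ r ∂μ)
        ≤ ∫⁻ x, A ^ (r - 2) * (‖h x‖₊ : ℝ≥0∞) ^ (2:ℝ) ∂μ := by
          refine lintegral_mono_ae (hae.mono fun x hx => ?_)
          have e : (‖h x‖₊ : ℝ≥0∞) ^ r = (‖h x‖₊ : ℝ≥0∞) ^ (r - 2) * (‖h x‖₊ : ℝ≥0∞) ^ (2:ℝ) := by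
            rw [← ENNReal.rpow_add_of_nonneg _ _ (by linarith) (by norm_num)]; norm_num
          rw [e]
          exact mul_le_mul_left (ENNReal.rpow_le_rpow hx (by linarith)) _
      _ = A ^ (r - 2) * ∫⁻ x, (‖h x‖₊ : ℝ≥0∞) ^ (2:ℝ) ∂μ :=
          lintegral_const_mul' _ _ (ENNReal.rpow_ne_top_of_nonneg (by linarith) hA)
      _ ≤ A ^ (r - 2) * B ^ (2:ℝ) := mul_le_mul_right hI2 _
  rw [eLpNorm_eq_lintegral_rpow_enorm_toReal (by simp [hr0] : ENNReal.ofReal r ≠ 0)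
    ENNReal.ofReal_ne_top, ENNReal.toReal_ofReal hr0.le]
  calc (∫⁻ x, (‖h x‖₊ : ℝ≥0∞) ^ r ∂μ) ^ (1/r)
      ≤ (A ^ (r - 2) * B ^ (2:ℝ)) ^ (1/r) :=
        ENNReal.rpow_le_rpow step1 (by positivity)
    _ = B ^ (2/r) * A ^ (1 - 2/r) := by
        rw [ENNReal.mul_rpow_of_nonneg _ _ (by positivity), ← ENNReal.rpow_mul,
          ← ENNReal.rpow_mul, mul_comm]
        rw [(by field_simp : (2:ℝ) * (1/r) = 2/r), (by field_simp : (r - 2) * (1/r) = 1 - 2/r)]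

private lemma aux_coeFn_sum {X : Type*} [MeasurableSpace X] {μ : Measure X}
    (s : Finset ℕ) (F : ℕ → Lp ℂ 2 μ) :
    ⇑(∑ i ∈ s, F i) =ᵐ[μ] fun x => ∑ i ∈ s, F i x := by
  classical
  induction s using Finset.induction_on with
  | empty => simp only [Finset.sum_empty]; exact Lp.coeFn_zero ℂ 2 μ
  | insert _ _ hx ih =>
    rename_i a s'
    rw [Finset.sum_insert hx]
    filter_upwards [Lp.coeFn_add (F a) (∑ i ∈ s', F i), ih] with x h1 h2
    rw [h1]
    simp only [Pi.add_apply, h2, Finset.sum_insert hx]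

private lemma aux_sum_ae {X : Type*} [MeasurableSpace X] {μ : Measure X}
    {u : ℕ → X → ℂ} {v : ℕ → Lp ℂ 2 μ} (hv_ae : ∀ j, ⇑(v j) =ᵐ[μ] u j)
    (T : Finset ℕ) (c : ℕ → ℂ) :
    ⇑(∑ j ∈ T, c j • v j) =ᵐ[μ] fun x => ∑ j ∈ T, c j * u j x := by
  refine (aux_coeFn_sum T fun j => c j • v j).trans ?_
  have hterm : ∀ᵐ x ∂μ, ∀ j ∈ (T : Set ℕ), (c j • v j) x = c j * u j x := by
    rw [MeasureTheory.ae_ball_iff T.countable_toSet]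
    intro j _
    filter_upwards [Lp.coeFn_smul (c j) (v j), hv_ae j] with x h1 h2
    rw [h1]; simp [h2]
  filter_upwards [hterm] with x hx
  exact Finset.sum_congr rfl hx

private lemma aux_l2_bound {X : Type*} [MeasurableSpace X] {μ : Measure X}
    {u : ℕ → X → ℂ}
    {v : ℕ → Lp ℂ 2 μ} (hv : Orthonormal ℂ v) (hv_ae : ∀ j, ⇑(v j) =ᵐ[μ] u j)
    (T : Finset ℕ) (c : ℕ → ℂ) :
    eLpNorm (fun x => ∑ j ∈ T, c j * u j x) 2 μ
      ≤ ENNReal.ofReal (Real.sqrt (∑ j ∈ T, ‖c j‖ ^ 2)) := by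
  set G : Lp ℂ 2 μ := ∑ j ∈ T, c j • v j with hGdef
  have hG : ⇑G =ᵐ[μ] fun x => ∑ j ∈ T, c j * u j x := aux_sum_ae hv_ae T c
  have h1 : eLpNorm (fun x => ∑ j ∈ T, c j * u j x) 2 μ = ENNReal.ofReal ‖G‖ := by
    rw [← eLpNorm_congr_ae hG, Lp.norm_def,
      ENNReal.ofReal_toReal (Lp.eLpNorm_ne_top G)]
  rw [h1]
  refine ENNReal.ofReal_le_ofReal ?_
  have hnorm2 : ‖G‖ ^ 2 = ∑ j ∈ T, ‖c j‖ ^ 2 := by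
    have h2 : (inner ℂ G G : ℂ) = ∑ j ∈ T, (starRingEnd ℂ) (c j) * c j := hv.inner_sum c c T
    rw [inner_self_eq_norm_sq_to_K] at h2
    simp only [RCLike.conj_mul] at h2
    exact_mod_cast h2
  rw [show ‖G‖ = Real.sqrt (‖G‖ ^ 2) from (Real.sqrt_sq (norm_nonneg _)).symm, hnorm2]

private lemma aux_linf_bound {X : Type*} [MeasurableSpace X] {μ : Measure X}
    {u : ℕ → X → ℂ} {lam : ℕ → ℝ} {C₁ M : ℝ} (hC₁ : 0 ≤ C₁) (hM : 0 ≤ M)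
    (hU : ∀ᵐ x ∂μ, ∀ j, ‖u j x‖ ≤ C₁ * lam j)
    (T : Finset ℕ) (hTM : ∀ j ∈ T, lam j ≤ M) (c : ℕ → ℂ) :
    eLpNormEssSup (fun x => ∑ j ∈ T, c j * u j x) μ
      ≤ ENNReal.ofReal ((C₁ * M * Real.sqrt T.card) * Real.sqrt (∑ j ∈ T, ‖c j‖ ^ 2)) := by
  refine eLpNormEssSup_le_of_ae_bound (hU.mono fun x hx => ?_)
  calc ‖∑ j ∈ T, c j * u j x‖ ≤ ∑ j ∈ T, ‖c j * u j x‖ := norm_sum_le _ _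
    _ ≤ ∑ j ∈ T, ‖c j‖ * (C₁ * M) := by
        refine Finset.sum_le_sum fun j hj => ?_
        rw [norm_mul]
        refine mul_le_mul_of_nonneg_left ?_ (norm_nonneg _)
        exact (hx j).trans (mul_le_mul_of_nonneg_left (hTM j hj) hC₁)
    _ = (C₁ * M) * ∑ j ∈ T, ‖c j‖ * 1 := by rw [Finset.mul_sum]; simp [mul_comm]
    _ ≤ (C₁ * M) * (Real.sqrt (∑ j ∈ T, ‖c j‖ ^ 2) * Real.sqrt (∑ j ∈ T, (1:ℝ) ^ 2)) := by
        refine mul_le_mul_of_nonneg_left ?_ (by positivity)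
        exact Real.sum_mul_le_sqrt_mul_sqrt T _ _
    _ = (C₁ * M * Real.sqrt T.card) * Real.sqrt (∑ j ∈ T, ‖c j‖ ^ 2) := by
        simp only [one_pow, Finset.sum_const, nsmul_eq_mul, mul_one]
        ring

private lemma aux_rpow_combine {r : ℝ} (hr : 2 ≤ r) (sE W : ℝ) (hW : 0 ≤ W) :
    ENNReal.ofReal sE ^ (2/r) * ENNReal.ofReal (W * sE) ^ (1 - 2/r)
      = ENNReal.ofReal sE * ENNReal.ofReal W ^ (1 - 2/r) := by
  have hr0 : (0:ℝ) < r := lt_of_lt_of_le two_pos hr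
  have h1 : (0:ℝ) ≤ 2/r := by positivity
  have h2 : (0:ℝ) ≤ 1 - 2/r := by
    rw [sub_nonneg, div_le_one hr0]; exact hr
  rw [ENNReal.ofReal_mul hW, ENNReal.mul_rpow_of_nonneg _ _ h2, ← mul_assoc,
    mul_comm (ENNReal.ofReal sE ^ (2/r)) _, mul_assoc,
    ← ENNReal.rpow_add_of_nonneg _ _ h1 h2]
  norm_num
  ring_nf

private lemma aux_block {X : Type*} [MeasurableSpace X] {μ : Measure X}
    {u : ℕ → X → ℂ}
    {v : ℕ → Lp ℂ 2 μ} (hv : Orthonormal ℂ v) (hv_ae : ∀ j, ⇑(v j) =ᵐ[μ] u j)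
    {lam : ℕ → ℝ} {C₁ M : ℝ} (hC₁ : 0 ≤ C₁) (hM : 0 ≤ M)
    (hU : ∀ᵐ x ∂μ, ∀ j, ‖u j x‖ ≤ C₁ * lam j)
    (T : Finset ℕ) (hTM : ∀ j ∈ T, lam j ≤ M) (c : ℕ → ℂ)
    {r : ℝ} (hr : 2 ≤ r) :
    eLpNorm (fun x => ∑ j ∈ T, c j * u j x) (ENNReal.ofReal r) μ
      ≤ ENNReal.ofReal (Real.sqrt (∑ j ∈ T, ‖c j‖ ^ 2)) *
        ENNReal.ofReal (C₁ * M * Real.sqrt T.card) ^ (1 - 2/r) := by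
  refine le_trans (aux_interp _ hr ENNReal.ofReal_ne_top
    (aux_l2_bound hv hv_ae T c) (aux_linf_bound hC₁ hM hU T hTM c)) ?_
  exact le_of_eq (aux_rpow_combine hr _ _ (by positivity))

private lemma aux_eLpNorm_eq {X : Type*} [MeasurableSpace X] {μ : Measure X}
    (φ : X → ℂ) {r : ℝ} (hr : 0 < r) :
    eLpNorm φ (ENNReal.ofReal r) μ = (∫⁻ x, (‖φ x‖₊ : ℝ≥0∞) ^ r ∂μ) ^ (1/r) := by
  rw [eLpNorm_eq_lintegral_rpow_enorm_toReal (by simp [hr]) ENNReal.ofReal_ne_top,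
    ENNReal.toReal_ofReal hr.le]
  rfl

end AuxLemmas

/-- **Boundedness of negative powers**: under the standing hypotheses on the eigenfunctions
`(u j)` and eigenvalues `(lam j)` of the anharmonic oscillator (`‖uⱼ‖_∞ ≤ C₁ lam j`,
counting bound `#{j : lam j ≤ v} ≤ C₂ v^α`), if `1 < p ≤ 2 ≤ q < ∞` and
`m > (2+α)(1/p - 1/q)`, then there is a constant `C` such that for every `f ∈ Lᵖ ∩ L²`
the `L²` function `A^{-m} f = ∑ⱼ lam j^{-m} f̂(j) uⱼ` satisfies
`‖A^{-m} f‖_{L^q} ≤ C ‖f‖_{Lᵖ}`. -/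
theorem negative_powers_bounded_anharmonic
    (n : ℕ) (hn : 1 ≤ n)
    (u : ℕ → (Fin n → ℝ) → ℂ)
    (hu2 : ∀ j, MemLp (u j) 2 volume)
    (huB : ∀ j, MemLp (u j) ⊤ volume)
    (horth : ∀ i j, (∫ x, u i x * (starRingEnd ℂ) (u j x)) = if i = j then (1 : ℂ) else 0)
    (hbasis : ∀ g : (Fin n → ℝ) → ℂ, MemLp g 2 volume →
      (∀ j, (∫ x, g x * (starRingEnd ℂ) (u j x)) = 0) → g =ᵐ[volume] 0)
    (lam : ℕ → ℝ) (hlam : ∀ j, 1 ≤ lam j)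
    (C₁ C₂ α : ℝ) (hC₁ : 0 < C₁) (hC₂ : 0 < C₂) (hα : 0 < α)
    (hub : ∀ j, eLpNorm (u j) ⊤ volume ≤ ENNReal.ofReal (C₁ * lam j))
    (hcount : ∀ v : ℝ, 1 ≤ v →
      (∑' j : ℕ, (if lam j ≤ v then (1 : ℝ≥0∞) else 0)) ≤ ENNReal.ofReal (C₂ * v ^ α))
    (p q : ℝ) (hp1 : 1 < p) (hp2 : p ≤ 2) (hq2 : 2 ≤ q)
    (m : ℝ) (hm : (2 + α) * (1 / p - 1 / q) < m) :
    ∃ C : ℝ≥0∞, C ≠ ⊤ ∧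
      ∀ f : (Fin n → ℝ) → ℂ,
        MemLp f (ENNReal.ofReal p) volume → MemLp f 2 volume →
        ∃ g : (Fin n → ℝ) → ℂ, MemLp g 2 volume ∧
          (∀ j, (∫ x, g x * (starRingEnd ℂ) (u j x))
              = ((lam j ^ (-m) : ℝ) : ℂ) * ∫ x, f x * (starRingEnd ℂ) (u j x)) ∧
          MemLp g (ENNReal.ofReal q) volume ∧
          eLpNorm g (ENNReal.ofReal q) volume ≤ C * eLpNorm f (ENNReal.ofReal p) volume := by
  classical
  -- exponent bookkeeping
  have hp0 : (0:ℝ) < p := lt_trans one_pos hp1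
  have hq0 : (0:ℝ) < q := lt_of_lt_of_le two_pos hq2
  set p' : ℝ := p / (p - 1) with hp'def
  have hpc : p.HolderConjugate p' := Real.HolderConjugate.conjExponent hp1
  have hp'2 : 2 ≤ p' := by
    rw [hp'def, le_div_iff₀ (by linarith : (0:ℝ) < p - 1)]
    linarith
  have hθ₁ : 1 - 2/p' = 2/p - 1 := by
    rw [hp'def]
    field_simp
    ring
  set θ : ℝ := 2/p - 2/q with hθdef
  have hθ₁nn : (0:ℝ) ≤ 2/p - 1 := by
    rw [sub_nonneg, le_div_iff₀ hp0]; linarith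
  have hθ₂nn : (0:ℝ) ≤ 1 - 2/q := by
    rw [sub_nonneg, div_le_one hq0]; exact hq2
  have hθnn : 0 ≤ θ := by rw [hθdef]; linarith
  have hmθ : (1 + α/2) * θ < m := by
    have : (1 + α/2) * θ = (2 + α) * (1/p - 1/q) := by rw [hθdef]; ring
    rw [this]; exact hm
  have hm0 : 0 < m := lt_of_le_of_lt (by positivity : (0:ℝ) ≤ (1 + α/2) * θ) hmθ
  -- the geometric data
  set t : ℝ := (2:ℝ) ^ ((1 + α/2) * θ - m) with htdef
  have ht0 : 0 < t := Real.rpow_pos_of_pos two_pos _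
  have ht1 : t < 1 := Real.rpow_lt_one_of_one_lt_of_neg one_lt_two (by linarith)
  set K₁ : ℝ := (C₁ * Real.sqrt C₂) ^ θ * (2:ℝ) ^ ((1 + α/2) * θ) with hK₁def
  have hK₁0 : 0 ≤ K₁ := by positivity
  -- a.e. bound for the eigenfunctions
  have hU : ∀ᵐ x ∂(volume : Measure (Fin n → ℝ)), ∀ j, ‖u j x‖ ≤ C₁ * lam j := by
    rw [ae_all_iff]
    intro j
    have h1 : ∀ᵐ x ∂(volume : Measure (Fin n → ℝ)),
        (‖u j x‖₊ : ℝ≥0∞) ≤ ENNReal.ofReal (C₁ * lam j) :=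
      (enorm_ae_le_eLpNormEssSup (u j) volume).mono fun x hx =>
        hx.trans (by simpa [eLpNorm_exponent_top] using hub j)
    filter_upwards [h1] with x hx
    have hCl : 0 ≤ C₁ * lam j := by
      have := hlam j; positivity
    rwa [← enorm_eq_nnnorm, ← ofReal_norm, ENNReal.ofReal_le_ofReal_iff hCl] at hx
  -- the orthonormal family in L²
  set v : ℕ → Lp ℂ 2 (volume : Measure (Fin n → ℝ)) := fun j => (hu2 j).toLp (u j) with hvdef
  have hv_ae : ∀ j, ⇑(v j) =ᵐ[volume] u j := fun j => (hu2 j).coeFn_toLp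
  have hinner_eq : ∀ (j : ℕ) (φ : (Fin n → ℝ) → ℂ) (hφ : MemLp φ 2 volume),
      (inner ℂ (v j) (hφ.toLp φ) : ℂ) = ∫ x, φ x * (starRingEnd ℂ) (u j x) := by
    intro j φ hφ
    rw [MeasureTheory.L2.inner_def]
    refine integral_congr_ae ?_
    filter_upwards [hv_ae j, hφ.coeFn_toLp] with x h1 h2
    rw [RCLike.inner_apply, h1, h2, mul_comm]
  have honv : Orthonormal ℂ v := by
    rw [orthonormal_iff_ite]
    intro i j
    have h1 : (inner ℂ (v i) (v j) : ℂ) = ∫ x, u j x * (starRingEnd ℂ) (u i x) :=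
      hinner_eq i (u j) (hu2 j)
    rw [h1, horth j i]
    by_cases h : i = j <;> simp [h, eq_comm]
  have hsp : (Submodule.span ℂ (Set.range v))ᗮ = ⊥ := by
    rw [Submodule.eq_bot_iff]
    intro g₀ hg₀
    have hcoef : ∀ j, (inner ℂ (v j) g₀ : ℂ) = 0 := fun j =>
      hg₀ (v j) (Submodule.subset_span (Set.mem_range_self j))
    have hz : ∀ j, (∫ x, g₀ x * (starRingEnd ℂ) (u j x)) = 0 := by
      intro j
      have h1 : (inner ℂ (v j) ((Lp.memLp g₀).toLp ⇑g₀) : ℂ)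
          = ∫ x, g₀ x * (starRingEnd ℂ) (u j x) := hinner_eq j _ (Lp.memLp g₀)
      rw [← h1]
      rw [show (Lp.memLp g₀).toLp ⇑g₀ = g₀ from MeasureTheory.Lp.toLp_coeFn g₀ (Lp.memLp g₀)]
      exact hcoef j
    have := hbasis ⇑g₀ (Lp.memLp g₀) hz
    exact Lp.eq_zero_iff_ae_eq_zero.2 this
  set B := HilbertBasis.mkOfOrthogonalEqBot honv hsp with hBdef
  have hB : ⇑B = v := HilbertBasis.coe_mkOfOrthogonalEqBot honv hsp
  -- finiteness of spectral blocks
  have hfin : ∀ w : ℝ, 1 ≤ w → {j | lam j ≤ w}.Finite := by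
    intro w hw
    by_contra hinf
    obtain ⟨N, hN⟩ := ENNReal.exists_nat_gt (ENNReal.ofReal_ne_top : ENNReal.ofReal (C₂ * w ^ α) ≠ ⊤)
    obtain ⟨T, hTsub, hTcard⟩ := (Set.Infinite.exists_subset_card_eq hinf N)
    have h1 : (N : ℝ≥0∞) ≤ ∑' j : ℕ, (if lam j ≤ w then (1:ℝ≥0∞) else 0) := by
      calc (N : ℝ≥0∞) = ∑ _j ∈ T, (1:ℝ≥0∞) := by simp [hTcard]
        _ = ∑ j ∈ T, (if lam j ≤ w then (1:ℝ≥0∞) else 0) :=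
            Finset.sum_congr rfl fun j hj => (if_pos (hTsub (Finset.mem_coe.2 hj))).symm
        _ ≤ _ := ENNReal.sum_le_tsum T
    exact absurd ((h1.trans (hcount w hw)).trans_lt hN) (lt_irrefl _)
  have hSfin : ∀ k : ℕ, {j | (2:ℝ)^k ≤ lam j ∧ lam j < (2:ℝ)^(k+1)}.Finite := fun k =>
    (hfin ((2:ℝ)^(k+1)) (one_le_pow₀ one_le_two)).subset fun j hj => hj.2.le
  set S : ℕ → Finset ℕ := fun k => (hSfin k).toFinset with hSdef
  have hS_mem_iff : ∀ k j, j ∈ S k ↔ ((2:ℝ)^k ≤ lam j ∧ lam j < (2:ℝ)^(k+1)) := by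
    intro k j; rw [hSdef]; exact (hSfin k).mem_toFinset
  have hS_le : ∀ k, ∀ j ∈ S k, lam j ≤ (2:ℝ)^(k+1) := fun k j hj =>
    ((hS_mem_iff k j).1 hj).2.le
  have hS_ge : ∀ k, ∀ j ∈ S k, (2:ℝ)^k ≤ lam j := fun k j hj =>
    ((hS_mem_iff k j).1 hj).1
  have hcard : ∀ k, ((S k).card : ℝ) ≤ C₂ * ((2:ℝ)^(k+1)) ^ α := by
    intro k
    have hRnn : (0:ℝ) ≤ C₂ * ((2:ℝ)^(k+1)) ^ α := by positivity
    have h1 : (((S k).card : ℕ) : ℝ≥0∞) ≤ ENNReal.ofReal (C₂ * ((2:ℝ)^(k+1)) ^ α) := by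
      calc (((S k).card : ℕ) : ℝ≥0∞) = ∑ _j ∈ S k, (1:ℝ≥0∞) := by simp
        _ = ∑ j ∈ S k, (if lam j ≤ (2:ℝ)^(k+1) then (1:ℝ≥0∞) else 0) :=
            Finset.sum_congr rfl fun j hj => (if_pos (hS_le k j hj)).symm
        _ ≤ ∑' j : ℕ, (if lam j ≤ (2:ℝ)^(k+1) then (1:ℝ≥0∞) else 0) := ENNReal.sum_le_tsum _
        _ ≤ _ := hcount _ (one_le_pow₀ one_le_two)
    rw [show (((S k).card : ℕ) : ℝ≥0∞) = ENNReal.ofReal ((S k).card : ℝ) by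
      rw [ENNReal.ofReal_natCast]] at h1
    exact (ENNReal.ofReal_le_ofReal_iff hRnn).1 h1
  have hS_mem : ∀ j, ∃ k, j ∈ S k := by
    intro j
    have hx1 : (1:ℝ) ≤ lam j := hlam j
    have hx0 : (0:ℝ) < lam j := lt_of_lt_of_le one_pos hx1
    refine ⟨⌊Real.logb 2 (lam j)⌋₊, (hS_mem_iff _ j).2 ⟨?_, ?_⟩⟩
    · calc ((2:ℝ)^(⌊Real.logb 2 (lam j)⌋₊ : ℕ) : ℝ)
          = (2:ℝ) ^ ((⌊Real.logb 2 (lam j)⌋₊ : ℕ) : ℝ) := (Real.rpow_natCast 2 _).symm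
        _ ≤ (2:ℝ) ^ (Real.logb 2 (lam j)) :=
            Real.rpow_le_rpow_of_exponent_le one_le_two
              (Nat.floor_le (Real.logb_nonneg one_lt_two hx1))
        _ = lam j := Real.rpow_logb two_pos (by norm_num) hx0
    · calc lam j = (2:ℝ) ^ (Real.logb 2 (lam j)) :=
            (Real.rpow_logb two_pos (by norm_num) hx0).symm
        _ < (2:ℝ) ^ (((⌊Real.logb 2 (lam j)⌋₊ + 1 : ℕ)) : ℝ) := by
            refine Real.rpow_lt_rpow_of_exponent_lt one_lt_two ?_
            push_cast
            exact Nat.lt_floor_add_one _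
        _ = (2:ℝ) ^ ((⌊Real.logb 2 (lam j)⌋₊ + 1 : ℕ)) := Real.rpow_natCast 2 _
  have hS_disj : ∀ k k', k ≠ k' → Disjoint (S k) (S k') := by
    have key : ∀ a b : ℕ, a < b → ∀ j, j ∈ S a → j ∈ S b → False := by
      intro a b hab j hja hjb
      have h1 := ((hS_mem_iff a j).1 hja).2
      have h2 := ((hS_mem_iff b j).1 hjb).1
      have h3 : (2:ℝ)^(a+1) ≤ (2:ℝ)^b := pow_le_pow_right₀ one_le_two hab
      linarith
    intro k k' hne
    rcases lt_or_gt_of_ne hne with h | h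
    · exact Finset.disjoint_left.2 fun j hj hj' => key k k' h j hj hj'
    · exact Finset.disjoint_left.2 fun j hj hj' => key k' k h j hj' hj
  set U : ℕ → Finset ℕ := fun K => (Finset.range K).biUnion S with hUdef
  have hU_mono : Monotone U := fun K K' hKK' =>
    Finset.biUnion_subset_biUnion_of_subset_left _ (Finset.range_subset_range.2 hKK')
  have hU_exh : ∀ j, ∃ K, j ∈ U K := by
    intro j
    obtain ⟨k, hk⟩ := hS_mem j
    exact ⟨k+1, Finset.mem_biUnion.2 ⟨k, Finset.self_mem_range_succ k, hk⟩⟩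
  -- per-block ∞ constant
  set W : ℕ → ℝ := fun k => C₁ * (2:ℝ)^(k+1) * Real.sqrt (S k).card with hWdef
  have hW0 : ∀ k, 0 ≤ W k := by
    intro k; rw [hWdef]; positivity
  -- the key real inequality per block
  have hreal : ∀ k : ℕ, ((2:ℝ)^k) ^ (-m) * (W k) ^ θ ≤ K₁ * t^k := by
    intro k
    have hz0 : (0:ℝ) < (2:ℝ)^(k+1) := by positivity
    have e1 : ((2:ℝ)^(k+1) : ℝ) = (2:ℝ) ^ ((k:ℝ)+1) := by
      rw [← Real.rpow_natCast 2 (k+1)]; push_cast; ring_nf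
    have hW_le : W k ≤ (C₁ * Real.sqrt C₂) * (2:ℝ)^((((k:ℝ)+1)) * (1+α/2)) := by
      have hA : Real.sqrt ((S k).card) ≤ Real.sqrt (C₂ * ((2:ℝ)^(k+1)) ^ α) :=
        Real.sqrt_le_sqrt (hcard k)
      have hB : W k ≤ C₁ * (2:ℝ)^(k+1) * Real.sqrt (C₂ * ((2:ℝ)^(k+1)) ^ α) := by
        rw [hWdef]
        exact mul_le_mul_of_nonneg_left hA (by positivity)
      refine hB.trans (le_of_eq ?_)
      rw [Real.sqrt_mul hC₂.le, Real.sqrt_eq_rpow (((2:ℝ)^(k+1)) ^ α), e1,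
        ← Real.rpow_mul two_pos.le, ← Real.rpow_mul two_pos.le,
        (by ring : ((k:ℝ)+1) * α * ((1:ℝ)/2) = ((k:ℝ)+1) * (α/2)),
        (by rw [← Real.rpow_add two_pos]; congr 1; ring :
          (2:ℝ) ^ (((k:ℝ)+1) * (1+α/2)) = (2:ℝ) ^ ((k:ℝ)+1) * (2:ℝ) ^ (((k:ℝ)+1) * (α/2)))]
      ring
    have hWθ : (W k) ^ θ ≤ (C₁ * Real.sqrt C₂)^θ * (2:ℝ)^((((k:ℝ)+1)) * (1+α/2) * θ) := by
      refine (Real.rpow_le_rpow (hW0 k) hW_le hθnn).trans (le_of_eq ?_)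
      rw [Real.mul_rpow (by positivity) (by positivity), ← Real.rpow_mul two_pos.le]
    have hL : ((2:ℝ)^k) ^ (-m) = (2:ℝ) ^ ((k:ℝ) * (-m)) := by
      rw [← Real.rpow_natCast 2 k, ← Real.rpow_mul two_pos.le]
    calc ((2:ℝ)^k) ^ (-m) * (W k) ^ θ
        ≤ (2:ℝ) ^ ((k:ℝ) * (-m)) * ((C₁ * Real.sqrt C₂)^θ * (2:ℝ)^((((k:ℝ)+1)) * (1+α/2) * θ)) := by
          rw [← hL]
          exact mul_le_mul_of_nonneg_left hWθ (by positivity)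
      _ = (C₁ * Real.sqrt C₂)^θ *
            (2:ℝ) ^ ((k:ℝ) * (-m) + (((k:ℝ)+1)) * (1+α/2) * θ) := by
          rw [Real.rpow_add two_pos]; ring
      _ = K₁ * t^k := by
          rw [(by rw [← Real.rpow_add two_pos]; congr 1; ring :
            (2:ℝ) ^ ((k:ℝ) * (-m) + (((k:ℝ)+1)) * (1+α/2) * θ)
              = (2:ℝ) ^ ((1 + α/2) * θ) * (2:ℝ) ^ (((1 + α/2) * θ - m) * (k:ℝ))),
            htdef, hK₁def, ← Real.rpow_natCast ((2:ℝ) ^ ((1 + α/2) * θ - m)) k,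
            ← Real.rpow_mul two_pos.le]
          rw [(by ring : ((1 + α/2) * θ - m) * (k:ℝ) = (k:ℝ) * ((1 + α/2) * θ - m))]
          ring
  -- the constant
  refine ⟨ENNReal.ofReal (K₁ * (1 - t)⁻¹), ENNReal.ofReal_ne_top, ?_⟩
  intro f hfp hf2
  set F := eLpNorm f (ENNReal.ofReal p) volume with hFdef
  have hFne : F ≠ ⊤ := hfp.2.ne
  have hfm : AEStronglyMeasurable f volume := hf2.1
  set fhat : ℕ → ℂ := fun j => ∫ x, f x * (starRingEnd ℂ) (u j x) with hfhatdef
  set fL2 := hf2.toLp f with hfL2def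
  have hfhat_inner : ∀ j, (inner ℂ (v j) fL2 : ℂ) = fhat j := fun j => hinner_eq j f hf2
  have hsum : Summable (fun j => ‖fhat j‖ ^ 2) := by
    refine (honv.inner_products_summable (x := fL2)).congr fun j => ?_
    rw [hfhat_inner j]
  -- the coefficients of A^{-m} f
  set b : ℕ → ℂ := fun j => ((lam j ^ (-m) : ℝ) : ℂ) * fhat j with hbdef
  have hlam0 : ∀ j, (0:ℝ) < lam j := fun j => lt_of_lt_of_le one_pos (hlam j)
  have hb_le : ∀ j, ‖b j‖ ≤ ‖fhat j‖ := by
    intro j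
    rw [hbdef]
    simp only [norm_mul, Complex.norm_real, Real.norm_eq_abs,
      abs_of_nonneg (Real.rpow_nonneg (hlam0 j).le _)]
    have h1 : lam j ^ (-m) ≤ 1 :=
      Real.rpow_le_one_of_one_le_of_nonpos (hlam j) (by linarith)
    calc lam j ^ (-m) * ‖fhat j‖ ≤ 1 * ‖fhat j‖ :=
          mul_le_mul_of_nonneg_right h1 (norm_nonneg _)
      _ = ‖fhat j‖ := one_mul _
  have hbsum : Summable (fun j => ‖b j‖ ^ 2) := by
    refine Summable.of_nonneg_of_le (fun j => by positivity) (fun j => ?_) hsum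
    exact pow_le_pow_left₀ (norm_nonneg _) (hb_le j) 2
  have hbl2 : Memℓp b 2 := by
    apply memℓp_gen
    have h2 : ((2:ℝ≥0∞)).toReal = (2:ℝ) := by simp
    rw [h2]
    exact (summable_congr fun j => by
      rw [← Real.rpow_natCast ‖b j‖ 2]; norm_num).mpr hbsum
  set bl : lp (fun _ : ℕ => ℂ) 2 := ⟨b, hbl2⟩ with hbldef
  set g₀ := B.repr.symm bl with hg₀def
  have hrepr : B.repr g₀ = bl := by rw [hg₀def]; exact B.repr.apply_symm_apply bl
  -- the coefficient identity
  have hcoef : ∀ j, (∫ x, g₀ x * (starRingEnd ℂ) (u j x)) = b j := by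
    intro j
    have h1 : (inner ℂ (v j) ((Lp.memLp g₀).toLp ⇑g₀) : ℂ)
        = ∫ x, g₀ x * (starRingEnd ℂ) (u j x) := hinner_eq j _ (Lp.memLp g₀)
    rw [← h1, MeasureTheory.Lp.toLp_coeFn g₀ (Lp.memLp g₀)]
    have h2 : B.repr g₀ j = inner ℂ (B j) g₀ := B.repr_apply_apply g₀ j
    have h3 : B j = v j := congrFun hB j
    rw [← h3, ← h2, hrepr]
  -- the spectral blocks of f
  set Er : ℕ → ℝ := fun k => ∑ j ∈ S k, ‖fhat j‖ ^ 2 with hErdef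
  have hEr0 : ∀ k, 0 ≤ Er k := fun k => Finset.sum_nonneg fun j _ => by positivity
  have hQmem : ∀ (c : ℕ → ℂ) (T : Finset ℕ),
      MemLp (fun x => ∑ j ∈ T, c j * u j x) 2 volume :=
    fun c T => memLp_finset_sum _ fun j _ => (hu2 j).const_mul _
  have hIfu : ∀ j, Integrable (fun x => f x * (starRingEnd ℂ) (u j x)) volume := by
    intro j
    have h1 := MeasureTheory.L2.integrable_inner (𝕜 := ℂ) (v j) fL2
    refine h1.congr ?_
    filter_upwards [hv_ae j, hf2.coeFn_toLp] with x h2 h3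
    rw [RCLike.inner_apply, h2, h3, mul_comm]
  have hEint : ∀ k, (∫ x, f x * (starRingEnd ℂ) (∑ j ∈ S k, fhat j * u j x))
      = ((Er k : ℝ) : ℂ) := by
    intro k
    have hptwise : ∀ x, f x * (starRingEnd ℂ) (∑ j ∈ S k, fhat j * u j x)
        = ∑ j ∈ S k, (starRingEnd ℂ) (fhat j) * (f x * (starRingEnd ℂ) (u j x)) := by
      intro x
      rw [map_sum, Finset.mul_sum]
      refine Finset.sum_congr rfl fun j _ => ?_
      rw [map_mul]; ring
    simp_rw [hptwise]
    rw [integral_finset_sum _ (fun j _ => (hIfu j).const_mul _)]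
    rw [hErdef]
    push_cast
    refine Finset.sum_congr rfl fun j _ => ?_
    rw [integral_const_mul]
    rw [show (∫ x, f x * (starRingEnd ℂ) (u j x)) = fhat j from rfl]
    rw [RCLike.conj_mul]
    norm_cast
  -- Hölder: control of the block energies
  have hHold : ∀ k, ENNReal.ofReal (Er k)
      ≤ F * eLpNorm (fun x => ∑ j ∈ S k, fhat j * u j x) (ENNReal.ofReal p') volume := by
    intro k
    have h0 : ENNReal.ofReal (Er k)
        = (‖((Er k : ℝ):ℂ)‖₊ : ℝ≥0∞) := by
      rw [← enorm_eq_nnnorm, ← ofReal_norm, Complex.norm_real, Real.norm_eq_abs,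
        abs_of_nonneg (hEr0 k)]
    rw [h0, ← hEint k]
    calc (↑‖∫ x, f x * (starRingEnd ℂ) (∑ j ∈ S k, fhat j * u j x)‖₊ : ℝ≥0∞)
        ≤ ∫⁻ x, ↑‖f x * (starRingEnd ℂ) (∑ j ∈ S k, fhat j * u j x)‖₊ ∂volume :=
          enorm_integral_le_lintegral_enorm _
      _ = ∫⁻ x, (↑‖f x‖₊ : ℝ≥0∞) * (↑‖∑ j ∈ S k, fhat j * u j x‖₊ : ℝ≥0∞) ∂volume := by
          refine lintegral_congr fun x => ?_
          rw [nnnorm_mul, RCLike.nnnorm_conj, ENNReal.coe_mul]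
      _ ≤ (∫⁻ x, (↑‖f x‖₊ : ℝ≥0∞) ^ p ∂volume) ^ (1/p) *
            (∫⁻ x, (↑‖∑ j ∈ S k, fhat j * u j x‖₊ : ℝ≥0∞) ^ p' ∂volume) ^ (1/p') :=
          ENNReal.lintegral_mul_le_Lp_mul_Lq volume hpc hfm.enorm
            (hQmem fhat (S k)).1.enorm
      _ = F * eLpNorm (fun x => ∑ j ∈ S k, fhat j * u j x) (ENNReal.ofReal p') volume := by
          rw [hFdef, aux_eLpNorm_eq f hp0,
            aux_eLpNorm_eq (fun x => ∑ j ∈ S k, fhat j * u j x)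
              (lt_of_lt_of_le two_pos hp'2)]
  -- bootstrapped coefficient bound
  have hEb : ∀ k, ENNReal.ofReal (Real.sqrt (Er k))
      ≤ F * ENNReal.ofReal (W k) ^ (2/p - 1) := by
    intro k
    by_cases hz : Real.sqrt (Er k) = 0
    · rw [hz]; simp
    have hM0 : (0:ℝ) ≤ (2:ℝ)^(k+1) := by positivity
    have hblock := aux_block honv hv_ae hC₁.le hM0 hU (S k) (hS_le k) fhat hp'2
    have h2 : ENNReal.ofReal (Er k)
        ≤ (F * ENNReal.ofReal (W k) ^ (2/p-1)) * ENNReal.ofReal (Real.sqrt (Er k)) := by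
      refine (hHold k).trans ?_
      calc F * eLpNorm (fun x => ∑ j ∈ S k, fhat j * u j x) (ENNReal.ofReal p') volume
          ≤ F * (ENNReal.ofReal (Real.sqrt (∑ j ∈ S k, ‖fhat j‖^2)) *
              ENNReal.ofReal (C₁ * (2:ℝ)^(k+1) * Real.sqrt (S k).card) ^ (1 - 2/p')) :=
            mul_le_mul_right hblock F
        _ = (F * ENNReal.ofReal (W k) ^ (2/p-1)) * ENNReal.ofReal (Real.sqrt (Er k)) := by
            rw [hθ₁, hWdef, hErdef]; ring
    have hEr_eq : ENNReal.ofReal (Er k)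
        = ENNReal.ofReal (Real.sqrt (Er k)) * ENNReal.ofReal (Real.sqrt (Er k)) := by
      rw [← ENNReal.ofReal_mul (Real.sqrt_nonneg _), Real.mul_self_sqrt (hEr0 k)]
    rw [hEr_eq] at h2
    have hne0 : ENNReal.ofReal (Real.sqrt (Er k)) ≠ 0 := by
      rw [Ne, ENNReal.ofReal_eq_zero, not_le]
      exact lt_of_le_of_ne (Real.sqrt_nonneg _) (Ne.symm hz)
    exact (ENNReal.mul_le_mul_iff_left hne0 ENNReal.ofReal_ne_top).1 h2
  -- per-block L^q bound
  have hBr : ∀ k, Real.sqrt (∑ j ∈ S k, ‖b j‖^2)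
      ≤ ((2:ℝ)^k)^(-m) * Real.sqrt (Er k) := by
    intro k
    have h2k0 : (0:ℝ) < (2:ℝ)^k := by positivity
    have hterm : ∀ j ∈ S k, ‖b j‖^2 ≤ (((2:ℝ)^k)^(-m))^2 * ‖fhat j‖^2 := by
      intro j hj
      have h1 : ‖b j‖ = (lam j ^ (-m)) * ‖fhat j‖ := by
        rw [hbdef]
        simp only [norm_mul, Complex.norm_real, Real.norm_eq_abs,
          abs_of_nonneg (Real.rpow_nonneg (hlam0 j).le _)]
      have h2 : lam j ^ (-m) ≤ ((2:ℝ)^k) ^ (-m) := by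
        rw [Real.rpow_neg (hlam0 j).le, Real.rpow_neg h2k0.le]
        exact inv_anti₀ (Real.rpow_pos_of_pos h2k0 m)
          (Real.rpow_le_rpow h2k0.le (hS_ge k j hj) hm0.le)
      calc ‖b j‖^2 = (lam j ^ (-m))^2 * ‖fhat j‖^2 := by rw [h1]; ring
        _ ≤ (((2:ℝ)^k)^(-m))^2 * ‖fhat j‖^2 :=
            mul_le_mul_of_nonneg_right
              (pow_le_pow_left₀ (Real.rpow_nonneg (hlam0 j).le _) h2 2) (by positivity)
    calc Real.sqrt (∑ j ∈ S k, ‖b j‖^2)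
        ≤ Real.sqrt ((((2:ℝ)^k)^(-m))^2 * Er k) := by
          refine Real.sqrt_le_sqrt ?_
          refine (Finset.sum_le_sum hterm).trans (le_of_eq ?_)
          rw [← Finset.mul_sum, hErdef]
      _ = ((2:ℝ)^k)^(-m) * Real.sqrt (Er k) := by
          rw [Real.sqrt_mul (sq_nonneg _), Real.sqrt_sq (Real.rpow_nonneg h2k0.le _)]
  have hgkb : ∀ k, eLpNorm (fun x => ∑ j ∈ S k, b j * u j x) (ENNReal.ofReal q) volume
      ≤ F * ENNReal.ofReal (K₁ * t^k) := by
    intro k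
    have hM0 : (0:ℝ) ≤ (2:ℝ)^(k+1) := by positivity
    have hblock := aux_block honv hv_ae hC₁.le hM0 hU (S k) (hS_le k) b hq2
    calc eLpNorm (fun x => ∑ j ∈ S k, b j * u j x) (ENNReal.ofReal q) volume
        ≤ ENNReal.ofReal (Real.sqrt (∑ j ∈ S k, ‖b j‖^2)) *
            ENNReal.ofReal (C₁ * (2:ℝ)^(k+1) * Real.sqrt (S k).card) ^ (1 - 2/q) := hblock
      _ ≤ (ENNReal.ofReal (((2:ℝ)^k)^(-m)) * ENNReal.ofReal (Real.sqrt (Er k))) *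
            ENNReal.ofReal (W k) ^ (1 - 2/q) := by
          rw [hWdef]
          refine mul_le_mul_left ?_ _
          rw [← ENNReal.ofReal_mul (Real.rpow_nonneg (by positivity) _)]
          exact ENNReal.ofReal_le_ofReal (hBr k)
      _ ≤ (ENNReal.ofReal (((2:ℝ)^k)^(-m)) * (F * ENNReal.ofReal (W k) ^ (2/p-1))) *
            ENNReal.ofReal (W k) ^ (1 - 2/q) :=
          mul_le_mul_left (mul_le_mul_right (hEb k) _) _
      _ = F * (ENNReal.ofReal (((2:ℝ)^k)^(-m)) *
            (ENNReal.ofReal (W k) ^ (2/p-1) * ENNReal.ofReal (W k) ^ (1-2/q))) := by ring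
      _ = F * (ENNReal.ofReal (((2:ℝ)^k)^(-m)) * ENNReal.ofReal (W k) ^ θ) := by
          rw [← ENNReal.rpow_add_of_nonneg _ _ hθ₁nn hθ₂nn,
            (by rw [hθdef]; ring : (2/p-1)+(1-2/q) = θ)]
      _ = F * ENNReal.ofReal (((2:ℝ)^k)^(-m) * (W k)^θ) := by
          rw [ENNReal.ofReal_rpow_of_nonneg (hW0 k) hθnn,
            ← ENNReal.ofReal_mul (Real.rpow_nonneg (by positivity) _)]
      _ ≤ F * ENNReal.ofReal (K₁ * t^k) :=
          mul_le_mul_right (ENNReal.ofReal_le_ofReal (hreal k)) F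
  -- summing the blocks
  set Mtot := ∑' k : ℕ,
    eLpNorm (fun x => ∑ j ∈ S k, b j * u j x) (ENNReal.ofReal q) volume with hMdef
  have hMle : Mtot ≤ ENNReal.ofReal (K₁ * (1-t)⁻¹) * F := by
    calc Mtot ≤ ∑' k : ℕ, F * ENNReal.ofReal (K₁ * t^k) := ENNReal.tsum_le_tsum hgkb
      _ = F * ∑' k : ℕ, ENNReal.ofReal (K₁ * t^k) := ENNReal.tsum_mul_left
      _ = F * ENNReal.ofReal (∑' k : ℕ, K₁ * t^k) := by
          rw [ENNReal.ofReal_tsum_of_nonneg (fun k => by positivity)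
            ((summable_geometric_of_lt_one ht0.le ht1).mul_left K₁)]
      _ = ENNReal.ofReal (K₁ * (1-t)⁻¹) * F := by
          rw [tsum_mul_left, tsum_geometric_of_lt_one ht0.le ht1, mul_comm]
  -- the partial sums converge to g₀ in L²
  have hGsum : HasSum (fun j => b j • v j) g₀ := by
    have h := B.hasSum_repr g₀
    have heq : (fun i => B.repr g₀ i • B i) = fun j => b j • v j := by
      funext j
      have h4 : (B.repr g₀) j = b j := by rw [hrepr]
      rw [h4]
      exact congrArg (fun z => b j • z) (congrFun hB j)
    rwa [heq] at h
  have hGtend : Filter.Tendsto (fun K => ∑ j ∈ U K, b j • v j)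
      Filter.atTop (nhds g₀) :=
    hGsum.comp (Filter.tendsto_atTop_finset_of_monotone hU_mono hU_exh)
  have htend0 : Filter.Tendsto
      (fun K => eLpNorm ((fun x => ∑ j ∈ U K, b j * u j x) - ⇑g₀) 2 volume)
      Filter.atTop (nhds 0) := by
    have hid : ∀ K, eLpNorm ((fun x => ∑ j ∈ U K, b j * u j x) - ⇑g₀) 2 volume
        = ENNReal.ofReal ‖(∑ j ∈ U K, b j • v j) - g₀‖ := by
      intro K
      have h1 : ⇑((∑ j ∈ U K, b j • v j) - g₀)
          =ᵐ[volume] (fun x => ∑ j ∈ U K, b j * u j x) - ⇑g₀ := by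
        filter_upwards [Lp.coeFn_sub (∑ j ∈ U K, b j • v j) g₀,
          aux_sum_ae hv_ae (U K) b] with x h2 h3
        rw [Pi.sub_apply, h2, Pi.sub_apply, h3]
      rw [← eLpNorm_congr_ae h1, Lp.norm_def, ENNReal.ofReal_toReal (Lp.eLpNorm_ne_top _)]
    simp_rw [hid]
    rw [show (0:ℝ≥0∞) = ENNReal.ofReal 0 by simp]
    exact ENNReal.tendsto_ofReal (tendsto_iff_norm_sub_tendsto_zero.mp hGtend)
  have hTIM : TendstoInMeasure volume (fun K => fun x => ∑ j ∈ U K, b j * u j x)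
      Filter.atTop ⇑g₀ :=
    tendstoInMeasure_of_tendsto_eLpNorm (p := 2) two_ne_zero
      (fun K => (hQmem b (U K)).1) (Lp.aestronglyMeasurable g₀) htend0
  obtain ⟨ns, hns_mono, hnsae⟩ := hTIM.exists_seq_tendsto_ae
  -- uniform L^q bound for the partial sums
  have hPK_le : ∀ K, eLpNorm (fun x => ∑ j ∈ U K, b j * u j x)
      (ENNReal.ofReal q) volume ≤ Mtot := by
    intro K
    have hPK_eq : (fun x => ∑ j ∈ U K, b j * u j x)
        = ∑ k ∈ Finset.range K, (fun x => ∑ j ∈ S k, b j * u j x) := by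
      funext x
      rw [Finset.sum_apply]
      exact Finset.sum_biUnion fun k _ k' _ hkk' => hS_disj k k' hkk'
    rw [hPK_eq]
    refine (eLpNorm_sum_le (fun k _ => (hQmem b (S k)).1)
      (by rw [ENNReal.one_le_ofReal]; linarith)).trans ?_
    exact ENNReal.sum_le_tsum _
  -- Fatou
  have hconst : ∀ i, (∫⁻ x, (‖∑ j ∈ U (ns i), b j * u j x‖₊ : ℝ≥0∞) ^ q ∂volume)
      ≤ Mtot ^ q := by
    intro i
    have h1 := hPK_le (ns i)
    rw [aux_eLpNorm_eq _ hq0] at h1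
    have h2 := ENNReal.rpow_le_rpow h1 hq0.le
    rwa [← ENNReal.rpow_mul, one_div, inv_mul_cancel₀ hq0.ne', ENNReal.rpow_one] at h2
  have hliminf : (∫⁻ x, (‖g₀ x‖₊ : ℝ≥0∞) ^ q ∂volume) ≤ Mtot ^ q := by
    have hfatou : (∫⁻ x, (‖g₀ x‖₊ : ℝ≥0∞) ^ q ∂volume)
        ≤ Filter.liminf (fun i =>
            ∫⁻ x, (‖∑ j ∈ U (ns i), b j * u j x‖₊ : ℝ≥0∞) ^ q ∂volume) Filter.atTop := by
      refine le_trans (lintegral_mono_ae ?_) (lintegral_liminf_le' ?_)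
      · filter_upwards [hnsae] with x hx
        have h2 : Filter.Tendsto (fun i => (‖∑ j ∈ U (ns i), b j * u j x‖₊ : ℝ≥0∞))
            Filter.atTop (nhds (‖g₀ x‖₊ : ℝ≥0∞)) :=
          ((ENNReal.continuous_coe.comp continuous_nnnorm).continuousAt.tendsto).comp hx
        have hcont : Filter.Tendsto
            (fun i => ((‖∑ j ∈ U (ns i), b j * u j x‖₊ : ℝ≥0∞)) ^ q)
            Filter.atTop (nhds ((‖g₀ x‖₊ : ℝ≥0∞) ^ q)) :=
          (ENNReal.continuous_rpow_const.continuousAt.tendsto).comp h2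
        rw [hcont.liminf_eq]
      · intro i
        exact (ENNReal.continuous_rpow_const.measurable.comp_aemeasurable
          (hQmem b (U (ns i))).1.enorm)
    refine hfatou.trans ?_
    refine le_trans (Filter.liminf_le_liminf (Filter.Eventually.of_forall hconst)) ?_
    rw [Filter.liminf_const]
  have hfinal : eLpNorm (⇑g₀) (ENNReal.ofReal q) volume ≤ Mtot := by
    rw [aux_eLpNorm_eq _ hq0]
    calc (∫⁻ x, (‖g₀ x‖₊ : ℝ≥0∞) ^ q ∂volume) ^ (1/q)
        ≤ (Mtot ^ q) ^ (1/q) := ENNReal.rpow_le_rpow hliminf (by positivity)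
      _ = Mtot := by
          rw [← ENNReal.rpow_mul, mul_one_div_cancel hq0.ne', ENNReal.rpow_one]
  have hbound : eLpNorm (⇑g₀) (ENNReal.ofReal q) volume
      ≤ ENNReal.ofReal (K₁ * (1-t)⁻¹) * F := hfinal.trans hMle
  exact ⟨⇑g₀, Lp.memLp g₀, fun j => by rw [hcoef j, hbdef],
    ⟨Lp.aestronglyMeasurable g₀,
      lt_of_le_of_lt hbound (ENNReal.mul_lt_top ENNReal.ofReal_lt_top hFne.lt_top)⟩,
    hbound⟩
end
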